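/- arXiv:1910.12148 — 2 statements merged into one kernel-verified Lean document; each statement's English description precedes it below -/
import Mathlib

section
/- Let f be a non-zero polynomial with complex coefficients, and for each natural number n define M_n(f) = ∫₀¹ f(x)^n dx (integrating along the real segment [0,1]). Then M_n(f) ≠ 0 for infinitely many n ∈ ℕ. -/
open Filter intervalIntegral Polynomial



noncomputable def mom (A : Type*) [CommRing A] [Algebra ℚ A] (p : Polynomial A) (n N : ℕ) : A :=
  ∑ k ∈ Finset.range N, algebraMap ℚ A (((k:ℚ)+1))⁻¹ * (p^n).coeff k

lemma mom_map {A B : Type*} [CommRing A] [CommRing B] [Algebra ℚ A] [Algebra ℚ B]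
    (φ : A →ₐ[ℚ] B) (p : Polynomial A) (n N : ℕ) :
    mom B (p.map φ.toRingHom) n N = φ (mom A p n N) := by
  simp only [mom, map_sum, map_mul, AlgHom.commutes, ← Polynomial.map_pow, Polynomial.coeff_map]
  rfl

lemma integral_eval (p : Polynomial ℂ) :
    (∫ x in (0:ℝ)..1, p.eval (x:ℂ)) =
      ∑ k ∈ Finset.range (p.natDegree + 1), p.coeff k / (k+1) := by
  have h1 : ∀ x : ℝ, p.eval (x:ℂ) = ∑ k ∈ Finset.range (p.natDegree + 1), p.coeff k * (x:ℂ)^k := by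
    intro x; exact p.eval_eq_sum_range _
  rw [intervalIntegral.integral_congr (g := fun x : ℝ => ∑ k ∈ Finset.range (p.natDegree + 1), p.coeff k * (x:ℂ)^k) (fun x _ => h1 x)]
  rw [intervalIntegral.integral_finset_sum]
  · refine Finset.sum_congr rfl fun k _ => ?_
    rw [intervalIntegral.integral_const_mul]
    have h2 : (∫ x in (0:ℝ)..1, (x:ℂ)^k) = ((∫ x in (0:ℝ)..1, x^k : ℝ) : ℂ) := by
      rw [← intervalIntegral.integral_ofReal]; norm_num
    rw [h2, integral_pow]; push_cast; ring
  · intro k _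
    apply Continuous.intervalIntegrable; continuity

lemma integral_pow_eq_mom (f : Polynomial ℂ) (n : ℕ) :
    (∫ x in (0:ℝ)..1, (f.eval (x:ℂ))^n) = mom ℂ f n (n * f.natDegree + 1) := by
  have h0 : ∀ x : ℝ, (f.eval (x:ℂ))^n = (f^n).eval (x:ℂ) := by intro x; rw [Polynomial.eval_pow]
  rw [intervalIntegral.integral_congr (fun x _ => h0 x), integral_eval]
  have hcast : ∀ k : ℕ, algebraMap ℚ ℂ (((k:ℚ)+1))⁻¹ * (f^n).coeff k = (f^n).coeff k / (k+1) := by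
    intro k
    have : algebraMap ℚ ℂ (((k:ℚ)+1))⁻¹ = (((k:ℂ)+1))⁻¹ := by
      push_cast [eq_ratCast (algebraMap ℚ ℂ)]
      norm_num
    rw [this, div_eq_inv_mul, mul_comm]
  rw [mom]
  rw [Finset.sum_congr rfl (fun k _ => hcast k)]
  apply Finset.sum_subset
  · apply Finset.range_subset_range.2
    have := Polynomial.natDegree_pow_le (p := f) (n := n)
    omega
  · intro k _ hk
    have hlt : (f^n).natDegree < k := by
      simp only [Finset.mem_range, not_lt] at *
      omega
    rw [Polynomial.coeff_eq_zero_of_natDegree_lt hlt, zero_div]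

set_option maxHeartbeats 1000000 in
lemma bound_aux {K : Type*} [Field K] [Algebra ℚ K] [Module.Finite ℚ K]
    {g : Polynomial K} {d : ℕ} (hgdeg : g.natDegree ≤ d) (hgd : g.coeff d ≠ 0) :
    ∃ B : ℕ, ∀ n ℓ : ℕ, ℓ.Prime → n * d + 1 = ℓ → B < ℓ →
      mom K g n (n * d + 1) ≠ 0 := by
  classical
  haveI : CharZero K := charZero_of_injective_algebraMap (algebraMap ℚ K).injective
  haveI := IsScalarTower.of_algebraMap_eq' (R := ℤ) (S := ℚ) (A := K) (RingHom.ext_int _ _)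
  haveI : Algebra.IsSeparable ℚ K := Algebra.IsSeparable.of_integral ℚ K
  -- clear denominators
  obtain ⟨M, hM, hMint⟩ := exists_integral_multiples ℤ ℚ (L := K)
    ((Finset.range (d+1)).image g.coeff)
  have hMK : ((M : ℤ) : K) ≠ 0 := Int.cast_ne_zero.mpr hM
  set h : Polynomial K := Polynomial.C ((M : ℤ) : K) * g with hh_def
  have hhcoeff : ∀ k : ℕ, h.coeff k = ((M : ℤ) : K) * g.coeff k :=
    fun k => Polynomial.coeff_C_mul _
  have hhint : ∀ k : ℕ, IsIntegral ℤ (h.coeff k) := by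
    intro k
    rw [hhcoeff]
    by_cases hk : k < d + 1
    · have := hMint (g.coeff k) (Finset.mem_image_of_mem _ (Finset.mem_range.mpr hk))
      rwa [zsmul_eq_mul] at this
    · rw [Polynomial.coeff_eq_zero_of_natDegree_lt (by omega : g.natDegree < k), mul_zero]
      exact isIntegral_zero
  set γ : K := ((M : ℤ) : K) * g.coeff d with hγ_def
  have hγ0 : γ ≠ 0 := mul_ne_zero hMK hgd
  have hγcoeff : h.coeff d = γ := hhcoeff d
  have hγint : IsIntegral ℤ γ := by rw [← hγcoeff]; exact hhint d
  have hhdeg : h.natDegree = d := by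
    apply le_antisymm
    · refine le_trans Polynomial.natDegree_mul_le ?_
      simp [Polynomial.natDegree_C, hgdeg]
    · apply Polynomial.le_natDegree_of_ne_zero
      rw [hγcoeff]; exact hγ0
  -- the norm of γ and the bound
  have hbint : IsIntegral ℤ (Algebra.norm ℚ γ) := Algebra.isIntegral_norm (K := ℚ) hγint
  obtain ⟨bz, hbz⟩ := IsIntegrallyClosed.isIntegral_iff.mp hbint
  have hb0 : Algebra.norm ℚ γ ≠ 0 := Algebra.norm_ne_zero_iff.mpr hγ0
  have hbz0 : bz ≠ 0 := fun hzz => hb0 (by rw [← hbz, hzz]; simp)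
  refine ⟨bz.natAbs, ?_⟩
  intro n ℓ hp hℓ hB hmom
  subst hℓ
  -- moments of h vanish as well
  have hmomh : ∑ k ∈ Finset.range (n*d+1), algebraMap ℚ K (((k:ℚ)+1))⁻¹ * ((h^n).coeff k) = 0 := by
    have hpow : ∀ k, (h^n).coeff k = ((M:ℤ):K)^n * ((g^n).coeff k) := by
      intro k
      rw [hh_def, mul_pow, ← Polynomial.C_pow, Polynomial.coeff_C_mul]
    calc ∑ k ∈ Finset.range (n*d+1), algebraMap ℚ K (((k:ℚ)+1))⁻¹ * ((h^n).coeff k)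
        = ((M:ℤ):K)^n * ∑ k ∈ Finset.range (n*d+1),
            algebraMap ℚ K (((k:ℚ)+1))⁻¹ * ((g^n).coeff k) := by
          rw [Finset.mul_sum]
          exact Finset.sum_congr rfl (fun k _ => by rw [hpow k]; ring)
      _ = ((M:ℤ):K)^n * mom K g n (n*d+1) := rfl
      _ = 0 := by rw [hmom, mul_zero]
  -- multiply by (n*d+1)!
  have hsum0 : ∑ k ∈ Finset.range (n*d+1),
      ((Nat.factorial (n*d+1) / (k+1) : ℕ) : K) * ((h^n).coeff k) = 0 := by
    have hterm : ∀ k ∈ Finset.range (n*d+1), ((Nat.factorial (n*d+1) / (k+1) : ℕ) : K)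
        = algebraMap ℚ K ((Nat.factorial (n*d+1) : ℚ)) * algebraMap ℚ K (((k:ℚ)+1))⁻¹ := by
      intro k hk
      rw [← map_mul]
      have hdvd : (k+1) ∣ Nat.factorial (n*d+1) :=
        Nat.dvd_factorial (by omega) (by simp only [Finset.mem_range] at hk; omega)
      have hq : ((Nat.factorial (n*d+1) / (k+1) : ℕ) : ℚ)
          = (Nat.factorial (n*d+1) : ℚ) * (((k:ℚ)+1))⁻¹ := by
        rw [Nat.cast_div hdvd (Nat.cast_ne_zero.mpr (by omega))]
        push_cast
        rw [div_eq_mul_inv]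
      rw [← hq, map_natCast]
    calc ∑ k ∈ Finset.range (n*d+1), ((Nat.factorial (n*d+1) / (k+1) : ℕ) : K) * ((h^n).coeff k)
        = algebraMap ℚ K ((Nat.factorial (n*d+1) : ℚ)) * ∑ k ∈ Finset.range (n*d+1),
            algebraMap ℚ K (((k:ℚ)+1))⁻¹ * ((h^n).coeff k) := by
          rw [Finset.mul_sum]
          refine Finset.sum_congr rfl (fun k hk => ?_)
          rw [hterm k hk]; ring
      _ = 0 := by rw [hmomh, mul_zero]
  rw [Finset.sum_range_succ] at hsum0
  -- the top coefficient
  have htop : ((h^n).coeff (n*d)) = γ^n := by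
    have hcp := Polynomial.coeff_pow_mul_natDegree h n
    rw [hhdeg] at hcp
    rw [hcp, Polynomial.leadingCoeff, hhdeg, hγcoeff]
  have hfacttop : (Nat.factorial (n*d+1) / (n*d+1) : ℕ) = Nat.factorial (n*d) := by
    rw [Nat.factorial_succ, Nat.mul_div_cancel_left _ (by omega)]
  -- rewrite the lower terms
  have hlow : ∀ k ∈ Finset.range (n*d), ((Nat.factorial (n*d+1) / (k+1) : ℕ) : K)
      = ((n*d+1 : ℕ) : K) * ((Nat.factorial (n*d) / (k+1) : ℕ) : K) := by
    intro k hk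
    simp only [Finset.mem_range] at hk
    have hdvd : (k+1) ∣ Nat.factorial (n*d) := Nat.dvd_factorial (by omega) (by omega)
    rw [← Nat.cast_mul]
    congr 1
    rw [Nat.factorial_succ, Nat.mul_div_assoc _ hdvd]
  set Y : K := ∑ k ∈ Finset.range (n*d), ((Nat.factorial (n*d) / (k+1) : ℕ) : K) * ((h^n).coeff k)
    with hY_def
  have hsplit : ((n*d+1 : ℕ) : K) * Y + ((Nat.factorial (n*d) : ℕ) : K) * γ^n = 0 := by
    rw [← hsum0, hY_def, Finset.mul_sum, htop, hfacttop]
    congr 1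
    refine Finset.sum_congr rfl (fun k hk => ?_)
    rw [hlow k hk]; ring
  -- integrality of Y
  have hpowint : ∀ k, IsIntegral ℤ ((h^n).coeff k) := by
    have hlift : h ∈ Polynomial.lifts (algebraMap (integralClosure ℤ K) K) := by
      rw [Polynomial.lifts_iff_coeff_lifts]
      intro j
      exact ⟨⟨h.coeff j, hhint j⟩, rfl⟩
    have hliftpow : h^n ∈ Polynomial.lifts (algebraMap (integralClosure ℤ K) K) :=
      pow_mem hlift n
    intro k
    obtain ⟨s, hs⟩ := (Polynomial.lifts_iff_coeff_lifts _).mp hliftpow k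
    rw [← hs]
    exact s.2
  have hYmem : Y ∈ integralClosure ℤ K := by
    rw [hY_def]
    refine Subalgebra.sum_mem _ (fun k _ => Subalgebra.mul_mem _ ?_ ?_)
    · exact Subalgebra.natCast_mem _ _
    · exact hpowint k
  have hYint : IsIntegral ℤ Y := hYmem
  -- apply the norm
  obtain ⟨yz, hyz⟩ := IsIntegrallyClosed.isIntegral_iff.mp
    (Algebra.isIntegral_norm (K := ℚ) hYint)
  set D := Module.finrank ℚ K with hD_def
  have hD1 : 0 < D := Module.finrank_pos
  have heq : ((Nat.factorial (n*d) : ℕ) : K) * γ^n = (-((n*d+1 : ℕ) : K)) * Y := by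
    rw [neg_mul]
    exact eq_neg_of_add_eq_zero_right hsplit
  have hnorm := congrArg (Algebra.norm ℚ) heq
  rw [show ((Nat.factorial (n*d) : ℕ) : K) = algebraMap ℚ K ((Nat.factorial (n*d) : ℕ) : ℚ) by
        rw [map_natCast],
      show (-((n*d+1 : ℕ) : K)) = algebraMap ℚ K (-((n*d+1 : ℕ) : ℚ)) by
        rw [map_neg, map_natCast]] at hnorm
  rw [map_mul, map_mul, map_pow, Algebra.norm_algebraMap, Algebra.norm_algebraMap] at hnorm
  rw [← hbz, ← hyz] at hnorm
  have hZ : ((Nat.factorial (n*d) : ℤ))^D * bz^n = (-((n*d+1 : ℕ) : ℤ))^D * yz := by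
    have hc1 : (algebraMap ℤ ℚ) bz = (bz:ℚ) := by simp
    have hc2 : (algebraMap ℤ ℚ) yz = (yz:ℚ) := by simp
    rw [hc1, hc2] at hnorm
    exact_mod_cast hnorm
  -- divisibility contradiction
  have hpz : Prime ((n*d+1 : ℕ) : ℤ) := Int.prime_iff_natAbs_prime.mpr (by exact hp)
  have hdl : ((n*d+1 : ℕ) : ℤ) ∣ ((Nat.factorial (n*d) : ℤ))^D * bz^n := by
    rw [hZ]
    refine Dvd.dvd.mul_right ?_ _
    exact dvd_pow ((dvd_neg).mpr dvd_rfl) (by omega)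
  rcases (hpz.dvd_mul.mp hdl) with hcase | hcase
  · have h1 : ((n*d+1 : ℕ) : ℤ) ∣ (Nat.factorial (n*d) : ℤ) := hpz.dvd_of_dvd_pow hcase
    have h2 : (n*d+1) ∣ Nat.factorial (n*d) := Int.natCast_dvd_natCast.mp h1
    have h3 := (Nat.Prime.dvd_factorial hp).mp h2
    omega
  · have h1 : ((n*d+1 : ℕ) : ℤ) ∣ bz := hpz.dvd_of_dvd_pow hcase
    have h2 : ((n*d+1 : ℕ) : ℤ) ≤ |bz| := Int.le_of_dvd (abs_pos.mpr hbz0) ((dvd_abs _ _).mpr h1)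
    rw [Int.abs_eq_natAbs] at h2
    have h3 : (n*d+1) ≤ bz.natAbs := by exact_mod_cast h2
    omega

set_option maxHeartbeats 1000000 in
set_option synthInstance.maxHeartbeats 400000 in
lemma key (f : Polynomial ℂ) (hf : f ≠ 0) (hd : f.natDegree ≠ 0) :
    ∃ B : ℕ, ∀ n ℓ : ℕ, ℓ.Prime → n * f.natDegree + 1 = ℓ → B < ℓ →
      mom ℂ f n (n * f.natDegree + 1) ≠ 0 := by
  classical
  set d := f.natDegree with hdd
  let σ := Sum (Fin (d+1)) Unit
  let T := MvPolynomial σ ℚ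
  let v : σ → ℂ := Sum.elim (fun i => f.coeff i) (fun _ => (f.coeff d)⁻¹)
  let ev : T →ₐ[ℚ] ℂ := MvPolynomial.aeval v
  let P : Ideal T := RingHom.ker ev.toRingHom
  have hPne : P ≠ ⊤ := by
    rw [Ideal.ne_top_iff_one]
    intro h
    have h2 : ev 1 = 0 := h
    rw [map_one] at h2
    exact one_ne_zero h2
  obtain ⟨m, hm, hPm⟩ := Ideal.exists_le_maximal P hPne
  haveI : m.IsMaximal := hm
  let K := T ⧸ m
  haveI : m.IsPrime := hm.isPrime
  let ψ : T →ₐ[ℚ] K := Ideal.Quotient.mkₐ ℚ m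
  have hψsurj : Function.Surjective (Ideal.Quotient.mk m) := Ideal.Quotient.mk_surjective
  have hInt : RingHom.IsIntegral ((Ideal.Quotient.mk m).comp MvPolynomial.C) := by
    letI : Field K := Ideal.Quotient.field m
    exact MvPolynomial.comp_C_integral_of_surjective_of_isJacobsonRing _ hψsurj
  have halg : algebraMap ℚ K = (Ideal.Quotient.mk m).comp MvPolynomial.C := by
    rw [← MvPolynomial.algebraMap_eq]
    rfl
  haveI hKint : Algebra.IsIntegral ℚ K := by
    constructor
    intro x
    have h3 := hInt x
    rw [← halg] at h3
    exact h3
  haveI : Algebra.FiniteType ℚ K := by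
    refine Algebra.FiniteType.of_surjective (Ideal.Quotient.mkₐ ℚ m) ?_
    · exact Ideal.Quotient.mkₐ_surjective ℚ m
  haveI hKfin : Module.Finite ℚ K := Algebra.IsIntegral.finite
  -- images of variables
  let β : σ → K := fun i => ψ (MvPolynomial.X i)
  have hfd : f.coeff d ≠ 0 := by
    rw [← Polynomial.leadingCoeff]
    exact Polynomial.leadingCoeff_ne_zero.mpr hf
  have hmem : ∀ x : T, x ∈ m → ψ x = 0 := by
    intro x hx
    exact (Ideal.Quotient.eq_zero_iff_mem).mpr hx
  have hrel : ψ (MvPolynomial.X (Sum.inl (Fin.last d)) * MvPolynomial.X (Sum.inr ()) - 1) = 0 := by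
    apply hmem
    apply hPm
    show ev _ = 0
    rw [map_sub, map_mul, map_one]
    have h1 : ev (MvPolynomial.X (Sum.inl (Fin.last d))) = f.coeff d := by
      rw [MvPolynomial.aeval_X]
      rfl
    have h2 : ev (MvPolynomial.X (Sum.inr ())) = (f.coeff d)⁻¹ := by
      rw [MvPolynomial.aeval_X]
      rfl
    rw [h1, h2, mul_inv_cancel₀ hfd, sub_self]
  have hβd : β (Sum.inl (Fin.last d)) ≠ 0 := by
    rw [map_sub, map_mul, map_one, sub_eq_zero] at hrel
    exact left_ne_zero_of_mul_eq_one hrel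
  -- the generic polynomial
  let G : Polynomial T := ∑ i : Fin (d+1), Polynomial.C (MvPolynomial.X (Sum.inl i)) * Polynomial.X ^ (i:ℕ)
  have hGdeg : G.natDegree ≤ d := by
    apply Polynomial.natDegree_sum_le_of_forall_le
    intro i _
    refine le_trans (Polynomial.natDegree_C_mul_X_pow_le _ _) ?_
    omega
  have hGcoeff : ∀ k : ℕ, (hk : k < d + 1) → G.coeff k = MvPolynomial.X (Sum.inl ⟨k, hk⟩) := by
    intro k hk
    show (∑ i : Fin (d+1), Polynomial.C (MvPolynomial.X (Sum.inl i)) * Polynomial.X ^ (i:ℕ)).coeff k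
      = MvPolynomial.X (Sum.inl ⟨k, hk⟩)
    rw [Polynomial.finset_sum_coeff]
    have hterm : ∀ i : Fin (d+1),
        (Polynomial.C (MvPolynomial.X (Sum.inl i) : T) * Polynomial.X ^ (i:ℕ)).coeff k
        = if i = ⟨k, hk⟩ then MvPolynomial.X (Sum.inl i) else 0 := by
      intro i
      rw [Polynomial.coeff_C_mul, Polynomial.coeff_X_pow]
      by_cases h : i = ⟨k, hk⟩
      · subst h; simp
      · have hne : ¬ (k = (i:ℕ)) := fun hh => h (Fin.ext hh.symm)
        simp [hne, h]
    rw [Finset.sum_congr rfl (fun i _ => hterm i)]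
    rw [Finset.sum_ite_eq' Finset.univ (⟨k, hk⟩ : Fin (d+1)) (fun i => MvPolynomial.X (Sum.inl i))]
    simp
  have hGf : G.map ev.toRingHom = f := by
    rw [Polynomial.map_sum]
    have hterm : ∀ i : Fin (d+1),
        (Polynomial.C (MvPolynomial.X (Sum.inl i) : T) * Polynomial.X ^ (i:ℕ)).map ev.toRingHom
        = Polynomial.C (f.coeff (i:ℕ)) * Polynomial.X ^ (i:ℕ) := by
      intro i
      rw [Polynomial.map_mul, Polynomial.map_C, Polynomial.map_pow, Polynomial.map_X]
      congr 1
      show Polynomial.C (ev (MvPolynomial.X (Sum.inl i))) = _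
      rw [MvPolynomial.aeval_X]
      rfl
    rw [Finset.sum_congr rfl (fun i _ => hterm i)]
    rw [Fin.sum_univ_eq_sum_range (fun i => Polynomial.C (f.coeff i) * Polynomial.X ^ i) (d+1)]
    conv_rhs => rw [f.as_sum_range' (d+1) (by omega)]
    apply Finset.sum_congr rfl
    intro i _
    rw [Polynomial.C_mul_X_pow_eq_monomial]
  -- specialize over K
  let g : Polynomial K := G.map ψ.toRingHom
  have hgcoeff : ∀ k : ℕ, (hk : k < d + 1) → g.coeff k = β (Sum.inl ⟨k, hk⟩) := by
    intro k hk
    show (G.map ψ.toRingHom).coeff k = _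
    rw [Polynomial.coeff_map, hGcoeff k hk]
    rfl
  have hgdeg : g.natDegree ≤ d := le_trans Polynomial.natDegree_map_le hGdeg
  have hgd : g.coeff d ≠ 0 := by
    rw [hgcoeff d (by omega)]
    exact hβd
  -- apply the bound over K
  obtain ⟨B, hB⟩ := @bound_aux K (Ideal.Quotient.field m) _ hKfin g d hgdeg hgd
  refine ⟨B, ?_⟩
  intro n ℓ hp hℓ hBl hmom0
  -- transfer the vanishing of the moment
  have hevm : ev (mom T G n (n*d+1)) = 0 := by
    have h4 := mom_map ev G n (n*d+1)
    rw [hGf] at h4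
    rw [← h4]
    exact hmom0
  have hψ0 : ψ (mom T G n (n*d+1)) = 0 := by
    apply hmem
    apply hPm
    exact hevm
  have hmomg : mom K g n (n*d+1) = 0 := by
    have h5 := mom_map ψ G n (n*d+1)
    rw [hψ0] at h5
    exact h5
  exact hB n ℓ hp hℓ hBl hmomg

/-- For a non-zero complex polynomial `f`, the moments `Mₙ(f) = ∫₀¹ f(x)^n dx`
are non-zero for infinitely many `n`. -/
theorem moment_ne_zero_infinitely_often
    (f : Polynomial ℂ) (hf : f ≠ 0) :
    {n : ℕ | (∫ x in (0:ℝ)..1, (f.eval (x : ℂ)) ^ n) ≠ 0}.Infinite := by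
  by_cases hd : f.natDegree = 0
  · -- constant case
    have hC : f = Polynomial.C (f.coeff 0) := Polynomial.eq_C_of_natDegree_eq_zero hd
    have ha : f.coeff 0 ≠ 0 := by
      intro h0
      apply hf
      rw [hC, h0, map_zero]
    have hall : ∀ n : ℕ, (∫ x in (0:ℝ)..1, (f.eval (x : ℂ)) ^ n) ≠ 0 := by
      intro n
      have : ∀ x : ℝ, (f.eval (x:ℂ))^n = (f.coeff 0)^n := by
        intro x
        conv_lhs => rw [hC]
        rw [Polynomial.eval_C]
      rw [intervalIntegral.integral_congr (fun x _ => this x)]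
      rw [intervalIntegral.integral_const]
      simp only [sub_zero, one_smul]
      exact pow_ne_zero n ha
    have : {n : ℕ | (∫ x in (0:ℝ)..1, (f.eval (x : ℂ)) ^ n) ≠ 0} = Set.univ :=
      Set.eq_univ_of_forall hall
    rw [this]
    exact Set.infinite_univ
  · obtain ⟨B, hB⟩ := key f hf hd
    apply Set.infinite_of_not_bddAbove
    rw [not_bddAbove_iff]
    intro x
    obtain ⟨p, hp, hpgt, hpmod⟩ := Nat.exists_prime_gt_modEq_one (k := f.natDegree)
      (max B ((x+1) * f.natDegree + 1)) hd
    have hp1 : 1 ≤ p := hp.one_lt.le.trans' (by omega)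
    have hdvd : f.natDegree ∣ p - 1 := (Nat.modEq_iff_dvd' hp.one_lt.le).mp hpmod.symm
    set n := (p - 1) / f.natDegree with hn_def
    have hnd : n * f.natDegree = p - 1 := Nat.div_mul_cancel hdvd
    have hℓ : n * f.natDegree + 1 = p := by omega
    have hBp : B < p := by omega
    have hmem : n ∈ {n : ℕ | (∫ x in (0:ℝ)..1, (f.eval (x : ℂ)) ^ n) ≠ 0} := by
      have hne := hB n p hp hℓ hBp
      rw [Set.mem_setOf_eq, integral_pow_eq_mom]
      exact hne
    refine ⟨n, hmem, ?_⟩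
    have hgt : (x+1) * f.natDegree < n * f.natDegree := by omega
    have : x + 1 < n := by
      by_contra hcon
      push_neg at hcon
      have := Nat.mul_le_mul_right f.natDegree hcon
      omega
    omega
end

section
/- Let f be a polynomial with complex coefficients of degree at least 1, M_n(f) = ∫₀¹ f(x)^n dx, and S = { f(z) : z ∈ ℂ, f'(z) = 0 } ∪ { f(0), f(1) }. Then limsup_{n→∞} |M_n(f)|^{1/n} ≤ max{ |s| : s ∈ S }. -/
open Filter intervalIntegral Polynomial

section MomentProofAux
open Metric Set

/-- Every complex polynomial has a polynomial antiderivative. -/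
lemma exists_antideriv (p : ℂ[X]) : ∃ P : ℂ[X], P.derivative = p := by
  induction p using Polynomial.induction_on' with
  | add p q hp hq =>
    obtain ⟨P, hP⟩ := hp; obtain ⟨Q, hQ⟩ := hq
    exact ⟨P + Q, by rw [derivative_add, hP, hQ]⟩
  | monomial n a =>
    refine ⟨C (a / (n + 1)) * X ^ (n + 1), ?_⟩
    rw [derivative_C_mul, derivative_X_pow]
    rw [← C_mul_X_pow_eq_monomial]
    push_cast
    rw [← mul_assoc, ← C_mul]
    congr 2
    have hn : ((n:ℂ) + 1) ≠ 0 := by exact Nat.cast_add_one_ne_zero n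
    field_simp

/-- FTC along a segment for polynomials. -/
lemma seg_bound (p P : ℂ[X]) (hP : P.derivative = p) (z w : ℂ) {b : ℝ}
    (hb : ∀ x ∈ segment ℝ z w, ‖p.eval x‖ ≤ b) :
    ‖P.eval w - P.eval z‖ ≤ b * ‖w - z‖ := by
  have hmem : ∀ t : ℝ, t ∈ Set.Icc (0:ℝ) 1 → z + t • (w - z) ∈ segment ℝ z w := by
    intro t ht
    rw [segment_eq_image']
    exact ⟨t, ht, rfl⟩
  have hder : ∀ t ∈ Set.uIcc (0:ℝ) 1,
      HasDerivAt (fun s : ℝ => P.eval (z + s • (w - z)))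
        (p.eval (z + t • (w - z)) * (w - z)) t := by
    intro t _
    have h1 : HasDerivAt (fun s : ℝ => z + s • (w - z)) (w - z) t := by
      simpa using ((hasDerivAt_id t).smul_const (w - z)).const_add z
    have h2 : HasDerivAt (fun u : ℂ => P.eval u) (p.eval (z + t • (w - z)))
        (z + t • (w - z)) := by
      have := P.hasDerivAt (z + t • (w - z))
      rwa [hP] at this
    have := HasDerivAt.scomp (𝕜 := ℝ) t h2 h1
    simpa [smul_eq_mul, mul_comm, Function.comp_def] using this
  have hint : IntervalIntegrable (fun t : ℝ => p.eval (z + t • (w - z)) * (w - z))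
      MeasureTheory.volume 0 1 := by
    apply Continuous.intervalIntegrable
    have : Continuous fun t : ℝ => z + t • (w - z) := by continuity
    exact ((p.continuous_aeval.comp this).mul continuous_const)
  have heq := intervalIntegral.integral_eq_sub_of_hasDerivAt hder hint
  have hb' : ∀ t ∈ Set.uIoc (0:ℝ) 1, ‖p.eval (z + t • (w - z)) * (w - z)‖ ≤ b * ‖w - z‖ := by
    intro t ht
    rw [Set.uIoc_of_le (by norm_num : (0:ℝ) ≤ 1)] at ht
    have : z + t • (w - z) ∈ segment ℝ z w := hmem t ⟨le_of_lt ht.1, ht.2⟩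
    rw [norm_mul]
    exact mul_le_mul_of_nonneg_right (hb _ this) (norm_nonneg _)
  calc ‖P.eval w - P.eval z‖
      = ‖∫ t in (0:ℝ)..1, p.eval (z + t • (w - z)) * (w - z)‖ := by
        rw [heq]; norm_num
    _ ≤ b * ‖w - z‖ * |1 - 0| :=
        intervalIntegral.norm_integral_le_of_norm_le_const hb'
    _ = b * ‖w - z‖ := by norm_num

lemma charts (f : ℂ[X]) {A : Set ℂ} (hA : IsCompact A)
    (h0 : ∀ z ∈ A, f.derivative.eval z ≠ 0) :
    ∃ ε > (0:ℝ), ∃ δ > (0:ℝ),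
      (∀ y ∈ A, Set.InjOn (fun z => f.eval z) (ball y (2 * ε))) ∧
      (∀ y ∈ A, ∀ w : ℂ, dist w (f.eval y) ≤ δ →
        ∃ x : ℂ, dist x y ≤ ε ∧ f.eval x = w) := by
  set F : ℂ → ℂ := fun z => f.eval z with hF
  rcases Set.eq_empty_or_nonempty A with hAe | hAne
  · exact ⟨1, one_pos, 1, one_pos, by simp [hAe], by simp [hAe]⟩
  -- Phase 1 : uniform injectivity radius
  have hinj : ∀ y : A, ∃ ι : ℝ, 0 < ι ∧ Set.InjOn F (ball (y:ℂ) ι) := by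
    rintro ⟨y, hy⟩
    have hfd := (f.hasStrictDerivAt y).hasStrictFDerivAt_equiv (h0 y hy)
    set φ := hfd.toOpenPartialHomeomorph F with hφ
    have hcoe : ⇑φ = F := hfd.toOpenPartialHomeomorph_coe
    have hsrc : y ∈ φ.source := hfd.mem_toOpenPartialHomeomorph_source
    obtain ⟨ι, hι, hball⟩ := Metric.isOpen_iff.mp φ.open_source y hsrc
    refine ⟨ι, hι, ?_⟩
    have := φ.injOn.mono hball
    rwa [hcoe] at this
  choose ι hι hinj using hinj
  have hcov1 : A ⊆ ⋃ y : A, ball (y:ℂ) (ι y / 4) := by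
    intro z hz
    exact Set.mem_iUnion.mpr ⟨⟨z, hz⟩, mem_ball_self (by have := hι ⟨z, hz⟩; linarith)⟩
  obtain ⟨t, ht⟩ := hA.elim_finite_subcover _ (fun y : A => isOpen_ball) hcov1
  have htne : t.Nonempty := by
    obtain ⟨a, ha⟩ := hAne
    obtain ⟨y, hy1, hy2⟩ := Set.mem_iUnion₂.mp (ht ha)
    exact ⟨y, hy1⟩
  set ε : ℝ := t.inf' htne (fun y => ι y / 4) with hεdef
  have hε : 0 < ε := by
    rw [hεdef, Finset.lt_inf'_iff]
    intro y _; have := hι y; linarith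
  have hεle : ∀ y ∈ t, ε ≤ ι y / 4 := fun y hy => Finset.inf'_le _ hy
  have hInj : ∀ y ∈ A, Set.InjOn F (ball y (2 * ε)) := by
    intro y hy
    obtain ⟨j, hj1, hj2⟩ := Set.mem_iUnion₂.mp (ht hy)
    refine (hinj j).mono ?_
    intro u hu
    have h1 : dist u y < 2 * ε := mem_ball.mp hu
    have h2 : dist y (j:ℂ) < ι j / 4 := mem_ball.mp hj2
    have h3 : ε ≤ ι j / 4 := hεle j hj1
    have : dist u (j:ℂ) < ι j := by
      calc dist u (j:ℂ) ≤ dist u y + dist y (j:ℂ) := dist_triangle _ _ _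
        _ < 2 * ε + ι j / 4 := by linarith
        _ ≤ ι j := by linarith
    exact mem_ball.mpr this
  -- Phase 2 : uniform surjectivity radius
  have hsurj : ∀ y : A, ∃ δ : ℝ, 0 < δ ∧ ∃ σ : ℝ, 0 < σ ∧ σ ≤ ε / 2 ∧
      (∀ w : ℂ, dist w (F (y:ℂ)) ≤ 2 * δ → ∃ x : ℂ, dist x (y:ℂ) < ε / 2 ∧ F x = w) ∧
      (∀ y' : ℂ, dist y' (y:ℂ) < σ → dist (F y') (F (y:ℂ)) ≤ δ) := by
    rintro ⟨y, hy⟩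
    have hfd := (f.hasStrictDerivAt y).hasStrictFDerivAt_equiv (h0 y hy)
    set g := hfd.localInverse F _ y with hg
    have ev1 : ∀ᶠ w in nhds (F y), F (g w) = w := hfd.eventually_right_inverse
    have ev2 : ∀ᶠ w in nhds (F y), g w ∈ ball y (ε / 2) :=
      hfd.localInverse_tendsto (ball_mem_nhds _ (by positivity))
    obtain ⟨ρ, hρ, hev⟩ := Metric.eventually_nhds_iff_ball.mp (ev1.and ev2)
    have hFc : ContinuousAt F y := f.continuous_aeval.continuousAt
    obtain ⟨σ', hσ', hσc⟩ := Metric.continuousAt_iff.mp hFc (ρ / 3) (by positivity)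
    refine ⟨ρ / 3, by positivity, min σ' (ε / 2), by positivity,
      min_le_right _ _, ?_, ?_⟩
    · intro w hw
      have : w ∈ ball (F y) ρ := by
        rw [mem_ball]
        calc dist w (F y) ≤ 2 * (ρ / 3) := hw
          _ < ρ := by linarith
      obtain ⟨h1, h2⟩ := hev w this
      exact ⟨g w, mem_ball.mp h2, h1⟩
    · intro y' hy'
      have := hσc (show dist y' y < σ' from lt_of_lt_of_le hy' (min_le_left _ _))
      exact le_of_lt this
  choose δf hδf σf hσf hσle hsurjf hcontf using hsurj
  have hcov2 : A ⊆ ⋃ y : A, ball (y:ℂ) (σf y) := by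
    intro z hz
    exact Set.mem_iUnion.mpr ⟨⟨z, hz⟩, mem_ball_self (hσf _)⟩
  obtain ⟨t₂, ht₂⟩ := hA.elim_finite_subcover _ (fun y : A => isOpen_ball) hcov2
  have htne₂ : t₂.Nonempty := by
    obtain ⟨a, ha⟩ := hAne
    obtain ⟨y, hy1, hy2⟩ := Set.mem_iUnion₂.mp (ht₂ ha)
    exact ⟨y, hy1⟩
  refine ⟨ε, hε, t₂.inf' htne₂ δf, ?_, hInj, ?_⟩
  · rw [gt_iff_lt, Finset.lt_inf'_iff]; intro y _; exact hδf y
  · intro y hy w hw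
    obtain ⟨j, hj1, hj2⟩ := Set.mem_iUnion₂.mp (ht₂ hy)
    have hd1 : dist (F y) (F (j:ℂ)) ≤ δf j := hcontf j y (mem_ball.mp hj2)
    have hd2 : dist w (F (j:ℂ)) ≤ 2 * δf j := by
      calc dist w (F (j:ℂ)) ≤ dist w (F y) + dist (F y) (F (j:ℂ)) := dist_triangle _ _ _
        _ ≤ t₂.inf' htne₂ δf + δf j := add_le_add hw hd1
        _ ≤ 2 * δf j := by
            have : t₂.inf' htne₂ δf ≤ δf j := Finset.inf'_le _ hj1
            linarith
    obtain ⟨x, hx1, hx2⟩ := hsurjf j w hd2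
    refine ⟨x, ?_, hx2⟩
    have : dist x y ≤ dist x (j:ℂ) + dist (j:ℂ) y := dist_triangle _ _ _
    have h3 : dist (j:ℂ) y < ε / 2 := by
      rw [dist_comm]
      exact lt_of_lt_of_le (mem_ball.mp hj2) (hσle j)
    linarith

lemma step (f : ℂ[X]) {ρ'' ρ' c₀ c c' ε δ : ℝ}
    (hρ'' : 0 < ρ'') (hρρ : ρ'' ≤ ρ')
    (hε : 0 < ε) (hδ : 0 ≤ δ)
    (hInj : ∀ y ∈ {z : ℂ | ρ'' ≤ ‖f.eval z‖ ∧ ‖f.eval z‖ ≤ c₀},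
        Set.InjOn (fun z => f.eval z) (ball y (2 * ε)))
    (hSurj : ∀ y ∈ {z : ℂ | ρ'' ≤ ‖f.eval z‖ ∧ ‖f.eval z‖ ≤ c₀},
        ∀ w : ℂ, dist w (f.eval y) ≤ δ → ∃ x : ℂ, dist x y ≤ ε ∧ f.eval x = w)
    (hend0 : ‖f.eval 0‖ < ρ'') (hend1 : ‖f.eval 1‖ < ρ'')
    {γ : ℝ → ℂ} (hγ : Continuous γ)
    (hγ0 : ∀ t ≤ (0:ℝ), γ t = 0) (hγ1 : ∀ t ≥ (1:ℝ), γ t = 1)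
    (hub : ∀ t, ‖f.eval (γ t)‖ ≤ c)
    (hρc : ρ' ≤ c') (hcc : c ≤ c₀) (hstep : c ≤ c' + δ) :
    ∃ γ₂ : ℝ → ℂ, Continuous γ₂ ∧ (∀ t ≤ (0:ℝ), γ₂ t = 0) ∧ (∀ t ≥ (1:ℝ), γ₂ t = 1) ∧
      ∀ t, ‖f.eval (γ₂ t)‖ ≤ c' := by
  set A : Set ℂ := {z : ℂ | ρ'' ≤ ‖f.eval z‖ ∧ ‖f.eval z‖ ≤ c₀} with hAdef
  have hc'0 : 0 < c' := lt_of_lt_of_le (lt_of_lt_of_le hρ'' hρρ) hρc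
  set u : ℝ → ℂ := fun t => f.eval (γ t) with hudef
  have hu : Continuous u := f.continuous_aeval.comp hγ
  set m : ℝ → ℝ := fun t => min 1 (c' / ‖u t‖) with hmdef
  set v : ℝ → ℂ := fun t => (m t : ℝ) • u t with hvdef
  have hm0 : ∀ t, 0 ≤ m t := fun t => le_min one_pos.le (by positivity)
  have hm1 : ∀ t, m t ≤ 1 := fun t => min_le_left _ _
  have hveq : ∀ t, ‖u t‖ ≤ c' → v t = u t := by
    intro t h
    rcases eq_or_ne (u t) 0 with h0 | h0
    · simp [hvdef, h0]
    · have hpos : 0 < ‖u t‖ := norm_pos_iff.mpr h0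
      have h1 : (1:ℝ) ≤ c' / ‖u t‖ := (one_le_div hpos).mpr h
      have hmeq : m t = 1 := min_eq_left h1
      show m t • u t = u t
      rw [hmeq, one_smul]
  have hvnorm : ∀ t, ‖v t‖ ≤ c' := by
    intro t
    rcases eq_or_ne (u t) 0 with h0 | h0
    · simp [hvdef, h0]; positivity
    · have hpos : 0 < ‖u t‖ := norm_pos_iff.mpr h0
      have : ‖v t‖ = m t * ‖u t‖ := by
        rw [hvdef, norm_smul, Real.norm_eq_abs, abs_of_nonneg (hm0 t)]
      rw [this]
      calc m t * ‖u t‖ ≤ (c' / ‖u t‖) * ‖u t‖ :=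
            mul_le_mul_of_nonneg_right (min_le_right _ _) hpos.le
        _ = c' := div_mul_cancel₀ _ hpos.ne'
  have hvdist : ∀ t, dist (v t) (u t) ≤ δ := by
    intro t
    rcases le_or_gt ‖u t‖ c' with h | h
    · rw [hveq t h]; simpa using hδ
    · have hpos : 0 < ‖u t‖ := lt_trans hc'0 h
      have hmle : c' / ‖u t‖ ≤ 1 := (div_le_one hpos).mpr h.le
      have hmeq : m t = c' / ‖u t‖ := min_eq_right hmle
      have : v t - u t = ((m t - 1 : ℝ)) • u t := by
        rw [hvdef, sub_smul, one_smul]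
      rw [dist_eq_norm, this, norm_smul, Real.norm_eq_abs,
        abs_of_nonpos (by linarith [hm1 t]), neg_sub]
      have : (1 - m t) * ‖u t‖ = ‖u t‖ - c' := by
        rw [hmeq, sub_mul, one_mul, div_mul_cancel₀ _ hpos.ne']
      rw [this]
      have := hub t
      linarith
  have hvcont : Continuous v := by
    rw [continuous_iff_continuousAt]
    intro t
    rcases eq_or_ne (u t) 0 with h0 | h0
    · have hvt : v t = 0 := by simp [hvdef, h0]
      rw [ContinuousAt, hvt]
      refine squeeze_zero_norm (a := fun s => ‖u s‖) (fun s => ?_) ?_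
      · show ‖m s • u s‖ ≤ ‖u s‖
        rw [norm_smul, Real.norm_eq_abs, abs_of_nonneg (hm0 s)]
        exact mul_le_of_le_one_left (norm_nonneg _) (hm1 s)
      · have h2 := hu.norm.continuousAt (x := t)
        rwa [ContinuousAt, h0, norm_zero] at h2
    · have hpos : 0 < ‖u t‖ := norm_pos_iff.mpr h0
      refine ContinuousAt.smul (f := m) (g := u) ?_ ?_
      · exact (continuousAt_const.min (continuousAt_const.div
          hu.norm.continuousAt hpos.ne'))
      · exact hu.continuousAt
  have hAclosed : IsClosed A := by
    have : A = (fun z => ‖f.eval z‖) ⁻¹' (Set.Icc ρ'' c₀) := by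
      ext z; simp [hAdef, Set.mem_Icc]
    rw [this]
    exact IsClosed.preimage (f.continuous_aeval.norm) isClosed_Icc
  have hnotA : ∀ t, γ t ∉ A → v t = u t := by
    intro t h
    rcases le_or_gt ρ'' ‖u t‖ with h1 | h1
    · exact absurd ⟨h1, le_trans (hub t) hcc⟩ h
    · exact hveq t (le_trans h1.le (le_trans hρρ hρc))
  have hex : ∀ t, ∃ x : ℂ, dist x (γ t) ≤ ε ∧ f.eval x = v t ∧ (γ t ∉ A → x = γ t) := by
    intro t
    by_cases h : γ t ∈ A
    · obtain ⟨x, hx1, hx2⟩ := hSurj (γ t) h (v t) (hvdist t)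
      exact ⟨x, hx1, hx2, fun h' => absurd h h'⟩
    · exact ⟨γ t, by simp [hε.le], (hnotA t h).symm, fun _ => rfl⟩
  choose γ₂ hd hv hid using hex
  have huniq : ∀ t, γ t ∈ A → ∀ x₁ x₂ : ℂ, dist x₁ (γ t) ≤ ε → dist x₂ (γ t) ≤ ε →
      f.eval x₁ = f.eval x₂ → x₁ = x₂ := by
    intro t h x₁ x₂ h1 h2 h3
    have hb : ∀ x : ℂ, dist x (γ t) ≤ ε → x ∈ ball (γ t) (2 * ε) := by
      intro x hx; rw [mem_ball]; linarith
    exact hInj (γ t) h (hb x₁ h1) (hb x₂ h2) h3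
  -- compact set containing the curve
  have hKc : IsCompact (γ '' Set.Icc 0 1) := (isCompact_Icc).image hγ
  have hrange : ∀ t, γ t ∈ γ '' Set.Icc 0 1 := by
    intro t
    rcases le_or_gt t 0 with h | h
    · exact ⟨0, ⟨le_refl 0, zero_le_one⟩, by rw [hγ0 t h, hγ0 0 le_rfl]⟩
    rcases le_or_gt 1 t with h1 | h1
    · exact ⟨1, ⟨zero_le_one, le_refl 1⟩, by rw [hγ1 t h1, hγ1 1 le_rfl]⟩
    · exact ⟨t, ⟨h.le, h1.le⟩, rfl⟩
  have hγ₂mem : ∀ t, γ₂ t ∈ Metric.cthickening ε (γ '' Set.Icc 0 1) := by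
    intro t
    exact mem_cthickening_of_dist_le (γ₂ t) (γ t) ε _ (hrange t) (hd t)
  have hSc : IsCompact (Metric.cthickening ε (γ '' Set.Icc 0 1)) := hKc.cthickening
  have hcont : Continuous γ₂ := by
    rw [continuous_iff_continuousAt]
    intro t₀
    by_cases h : γ t₀ ∈ A
    · rw [ContinuousAt]
      apply tendsto_of_subseq_tendsto
      intro ns hns
      obtain ⟨a, ha, φ, hφ, hconv⟩ := hSc.tendsto_subseq (fun n => hγ₂mem (ns n))
      have hnsφ : Tendsto (fun n => ns (φ n)) atTop (nhds t₀) :=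
        hns.comp hφ.tendsto_atTop
      have hfa : f.eval a = v t₀ := by
        have h1 : Tendsto (fun n => f.eval (γ₂ (ns (φ n)))) atTop (nhds (f.eval a)) :=
          (f.continuous_aeval.continuousAt.tendsto).comp hconv
        have h2 : Tendsto (fun n => f.eval (γ₂ (ns (φ n)))) atTop (nhds (v t₀)) := by
          have : (fun n => f.eval (γ₂ (ns (φ n)))) = fun n => v (ns (φ n)) := by
            funext n; exact hv _
          rw [this]
          exact (hvcont.continuousAt.tendsto).comp hnsφ
        exact tendsto_nhds_unique h1 h2
      have hda : dist a (γ t₀) ≤ ε := by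
        have h1 : Tendsto (fun n => dist (γ₂ (ns (φ n))) (γ (ns (φ n)))) atTop
            (nhds (dist a (γ t₀))) :=
          (hconv.dist ((hγ.continuousAt.tendsto).comp hnsφ))
        exact le_of_tendsto h1 (Filter.Eventually.of_forall (fun n => hd _))
      have : a = γ₂ t₀ := huniq t₀ h a (γ₂ t₀) hda (hd t₀) (by rw [hfa, hv t₀])
      exact ⟨φ, by rwa [this] at hconv⟩
    · have hev : ∀ᶠ t in nhds t₀, γ t ∉ A := by
        have : γ ⁻¹' Aᶜ ∈ nhds t₀ :=
          hγ.continuousAt.preimage_mem_nhds (hAclosed.isOpen_compl.mem_nhds h)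
        filter_upwards [this] with t ht using ht
      have heq : γ =ᶠ[nhds t₀] γ₂ := by
        filter_upwards [hev] with t ht using (hid t ht).symm
      exact hγ.continuousAt.congr heq
  refine ⟨γ₂, hcont, ?_, ?_, ?_⟩
  · intro t ht
    have h1 : γ t = 0 := hγ0 t ht
    have : γ t ∉ A := by
      rw [hAdef]; intro hmem
      rw [h1] at hmem
      exact absurd hmem.1 (not_le.mpr hend0)
    rw [hid t this, h1]
  · intro t ht
    have h1 : γ t = 1 := hγ1 t ht
    have : γ t ∉ A := by
      rw [hAdef]; intro hmem
      rw [h1] at hmem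
      exact absurd hmem.1 (not_le.mpr hend1)
    rw [hid t this, h1]
  · intro t
    rw [hv t]
    exact hvnorm t

lemma exists_low_path (f : ℂ[X]) (hdeg : 1 ≤ f.natDegree)
    {r ρ' : ℝ}
    (hcrit : ∀ z : ℂ, f.derivative.eval z = 0 → ‖f.eval z‖ ≤ r)
    (hend0 : ‖f.eval 0‖ ≤ r) (hend1 : ‖f.eval 1‖ ≤ r)
    (hρ : r < ρ') :
    ∃ γ : ℝ → ℂ, Continuous γ ∧ γ 0 = 0 ∧ γ 1 = 1 ∧ ∀ t, ‖f.eval (γ t)‖ ≤ ρ' := by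
  have hr : 0 ≤ r := le_trans (norm_nonneg _) hend0
  set ρ'' : ℝ := (r + ρ') / 2 with hρ''def
  have hrρ'' : r < ρ'' := by rw [hρ''def]; linarith
  have hρ''ρ : ρ'' < ρ' := by rw [hρ''def]; linarith
  have hρ''0 : 0 < ρ'' := lt_of_le_of_lt hr hrρ''
  -- base path
  set γ₀ : ℝ → ℂ := fun t => ((max 0 (min 1 t) : ℝ) : ℂ) with hγ₀def
  have hγ₀c : Continuous γ₀ :=
    Complex.continuous_ofReal.comp (continuous_const.max (continuous_const.min continuous_id))
  have hγ₀0 : ∀ t ≤ (0:ℝ), γ₀ t = 0 := by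
    intro t ht
    have : max 0 (min 1 t) = 0 := max_eq_left (le_trans (min_le_right 1 t) ht)
    simp [hγ₀def, this]
  have hγ₀1 : ∀ t ≥ (1:ℝ), γ₀ t = 1 := by
    intro t ht
    have h1 : min 1 t = 1 := min_eq_left ht
    have : max 0 (min 1 t) = 1 := by rw [h1]; exact max_eq_right zero_le_one
    simp [hγ₀def, this]
  -- sup of |f| on the base path
  have hCc : IsCompact ((fun s : ℝ => (s:ℂ)) '' Set.Icc 0 1) :=
    isCompact_Icc.image Complex.continuous_ofReal
  have hCne : ((fun s : ℝ => (s:ℂ)) '' Set.Icc 0 1).Nonempty :=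
    ⟨0, 0, Set.mem_Icc.mpr ⟨le_rfl, zero_le_one⟩, rfl⟩
  obtain ⟨z₀, hz₀, hmax⟩ := hCc.exists_isMaxOn hCne
    (f.continuous_aeval.norm.continuousOn)
  set c₀ : ℝ := max ρ' ‖f.eval z₀‖ with hc₀def
  have hρ'c₀ : ρ' ≤ c₀ := le_max_left _ _
  have hub₀ : ∀ t, ‖f.eval (γ₀ t)‖ ≤ c₀ := by
    intro t
    have hmem : γ₀ t ∈ (fun s : ℝ => (s:ℂ)) '' Set.Icc 0 1 := by
      refine ⟨max 0 (min 1 t), Set.mem_Icc.mpr ⟨le_max_left _ _, ?_⟩, rfl⟩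
      exact max_le zero_le_one (min_le_left _ _)
    exact le_trans (hmax hmem) (le_max_right _ _)
  -- the compact annulus preimage
  set A : Set ℂ := {z : ℂ | ρ'' ≤ ‖f.eval z‖ ∧ ‖f.eval z‖ ≤ c₀} with hAdef
  have hAclosed : IsClosed A := by
    have : A = (fun z => ‖f.eval z‖) ⁻¹' (Set.Icc ρ'' c₀) := by
      ext z; simp [hAdef, Set.mem_Icc]
    rw [this]
    exact IsClosed.preimage (f.continuous_aeval.norm) isClosed_Icc
  have hdegpos : 0 < f.degree := natDegree_pos_iff_degree_pos.mp hdeg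
  have hinf : Tendsto (fun z : ℂ => ‖f.eval z‖) (cocompact ℂ) atTop := by
    have := f.tendsto_norm_atTop hdegpos (tendsto_norm_cocompact_atTop (E := ℂ))
    simpa using this
  have hAcomp : IsCompact A := by
    have ev : ∀ᶠ z in cocompact ℂ, c₀ < ‖f.eval z‖ := hinf.eventually_gt_atTop c₀
    rw [Filter.hasBasis_cocompact.eventually_iff] at ev
    obtain ⟨K, hK, hKs⟩ := ev
    refine hK.of_isClosed_subset hAclosed ?_
    intro z hz
    by_contra hzK
    exact absurd (hKs hzK) (not_lt.mpr hz.2)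
  have h0' : ∀ z ∈ A, f.derivative.eval z ≠ 0 := by
    intro z hz hzero
    have h1 := hcrit z hzero
    have h2 : ρ'' ≤ ‖f.eval z‖ := hz.1
    linarith
  obtain ⟨ε, hε, δ, hδ, hInj, hSurj⟩ := charts f hAcomp h0'
  have hend0' : ‖f.eval 0‖ < ρ'' := lt_of_le_of_lt hend0 hrρ''
  have hend1' : ‖f.eval 1‖ < ρ'' := lt_of_le_of_lt hend1 hrρ''
  -- iterate
  have hiter : ∀ k : ℕ, ∃ γ : ℝ → ℂ, Continuous γ ∧ (∀ t ≤ (0:ℝ), γ t = 0) ∧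
      (∀ t ≥ (1:ℝ), γ t = 1) ∧ ∀ t, ‖f.eval (γ t)‖ ≤ max ρ' (c₀ - k * δ) := by
    intro k
    induction k with
    | zero =>
      refine ⟨γ₀, hγ₀c, hγ₀0, hγ₀1, fun t => ?_⟩
      have h1 : ((0:ℕ):ℝ) * δ = 0 := by push_cast; ring
      rw [h1, sub_zero, max_eq_right hρ'c₀]
      exact hub₀ t
    | succ k ih =>
      obtain ⟨γ, hγc, hγ0, hγ1, hub⟩ := ih
      have hkδ : (0:ℝ) ≤ k * δ := by positivity
      refine step f hρ''0 hρ''ρ.le hε hδ.le hInj hSurj hend0' hend1' hγc hγ0 hγ1 hub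
        (le_max_left _ _) ?_ ?_
      · exact max_le hρ'c₀ (by linarith)
      · apply max_le
        · calc ρ' ≤ max ρ' (c₀ - (k+1 : ℕ) * δ) := le_max_left _ _
            _ ≤ max ρ' (c₀ - (k+1 : ℕ) * δ) + δ := le_add_of_nonneg_right hδ.le
        · have h1 : c₀ - k * δ = (c₀ - (k+1 : ℕ) * δ) + δ := by push_cast; ring
          rw [h1]
          have : c₀ - (k+1 : ℕ) * δ ≤ max ρ' (c₀ - (k+1 : ℕ) * δ) := le_max_right _ _
          linarith
  obtain ⟨k, hk⟩ := exists_nat_ge ((c₀ - ρ') / δ)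
  obtain ⟨γ, hγc, hγ0, hγ1, hub⟩ := hiter k
  have hmax : max ρ' (c₀ - k * δ) = ρ' := by
    apply max_eq_left
    have : c₀ - ρ' ≤ k * δ := by
      rw [div_le_iff₀ hδ] at hk
      linarith
    linarith
  rw [hmax] at hub
  exact ⟨γ, hγc, hγ0 0 le_rfl, hγ1 1 le_rfl, hub⟩

lemma moment_bound (f : ℂ[X]) (hdeg : 1 ≤ f.natDegree)
    {r b : ℝ}
    (hcrit : ∀ z : ℂ, f.derivative.eval z = 0 → ‖f.eval z‖ ≤ r)
    (hend0 : ‖f.eval 0‖ ≤ r) (hend1 : ‖f.eval 1‖ ≤ r)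
    (hb : r < b) :
    ∃ L : ℝ, 1 ≤ L ∧ ∀ n : ℕ,
      ‖∫ x in (0:ℝ)..1, (f.eval (x : ℂ)) ^ n‖ ≤ L * b ^ n := by
  have hr : 0 ≤ r := le_trans (norm_nonneg _) hend0
  have hb0 : 0 < b := lt_of_le_of_lt hr hb
  set ρ' : ℝ := (r + b) / 2 with hρ'def
  have hrρ : r < ρ' := by rw [hρ'def]; linarith
  have hρb : ρ' < b := by rw [hρ'def]; linarith
  obtain ⟨γ, hγc, hγ0, hγ1, hub⟩ := exists_low_path f hdeg hcrit hend0 hend1 hrρ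
  -- thickening of the curve stays below b
  set K : Set ℂ := γ '' Set.Icc 0 1 with hKdef
  have hKc : IsCompact K := isCompact_Icc.image hγc
  set W : Set ℂ := {z : ℂ | ‖f.eval z‖ < b} with hWdef
  have hWo : IsOpen W := by
    have : W = (fun z => ‖f.eval z‖) ⁻¹' (Set.Iio b) := by ext z; simp [hWdef]
    rw [this]
    exact IsOpen.preimage (f.continuous_aeval.norm) isOpen_Iio
  have hKW : K ⊆ W := by
    rintro z ⟨t, _, rfl⟩
    exact lt_of_le_of_lt (hub t) hρb
  obtain ⟨d, hd, hdW⟩ := hKc.exists_cthickening_subset_open hWo hKW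
  -- uniform continuity of γ on [0,1]
  have huc := isCompact_Icc.uniformContinuousOn_of_continuous
    (hγc.continuousOn : ContinuousOn γ (Set.Icc 0 1))
  rw [Metric.uniformContinuousOn_iff] at huc
  obtain ⟨η, hη, hηd⟩ := huc d hd
  obtain ⟨N, hN⟩ := exists_nat_gt (1 / η)
  have hN0 : 0 < N := by
    by_contra h
    push_neg at h
    interval_cases N
    · simp at hN
      have : (0:ℝ) < 1 / η := by positivity
      linarith
  have hNR : (0:ℝ) < N := by exact_mod_cast hN0
  -- mesh points
  set z : ℕ → ℂ := fun i => γ (i / N) with hzdef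
  have hz0 : z 0 = 0 := by
    rw [hzdef]; simp only [Nat.cast_zero, zero_div]; exact hγ0
  have hzN : z N = 1 := by
    rw [hzdef]
    simp only []
    rw [div_self hNR.ne']
    exact hγ1
  -- segments stay where |f| ≤ b
  have hseg : ∀ i : ℕ, i < N → ∀ x ∈ segment ℝ (z i) (z (i+1)), ‖f.eval x‖ ≤ b := by
    intro i hi x hx
    have himem : (i:ℝ)/N ∈ Set.Icc (0:ℝ) 1 := by
      constructor
      · positivity
      · rw [div_le_one hNR]; exact_mod_cast hi.le
    have hi1mem : ((i:ℝ)+1)/N ∈ Set.Icc (0:ℝ) 1 := by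
      constructor
      · positivity
      · rw [div_le_one hNR]; exact_mod_cast hi
    have hdist : dist ((i:ℝ)/N) (((i:ℝ)+1)/N) < η := by
      rw [Real.dist_eq]
      have : (i:ℝ)/N - ((i:ℝ)+1)/N = -(1/N) := by field_simp; ring
      rw [this, abs_neg, abs_of_pos (by positivity)]
      rw [div_lt_iff₀ hNR]
      calc (1:ℝ) = (1/η) * η := by field_simp
        _ < N * η := by exact mul_lt_mul_of_pos_right hN hη
        _ = η * N := by ring
    have hzd : dist (z (i+1)) (z i) < d := by
      have := hηd ((i:ℝ)/N) himem (((i:ℝ)+1)/N) hi1mem hdist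
      rw [hzdef]
      simp only [Nat.cast_add, Nat.cast_one]
      rw [dist_comm]
      exact this
    have hxball : x ∈ closedBall (z i) (dist (z i) (z (i+1))) := by
      have hconv : Convex ℝ (closedBall (z i) (dist (z i) (z (i+1)))) := convex_closedBall _ _
      have h1 : z i ∈ closedBall (z i) (dist (z i) (z (i+1))) :=
        mem_closedBall_self dist_nonneg
      have h2 : z (i+1) ∈ closedBall (z i) (dist (z i) (z (i+1))) := by
        rw [mem_closedBall, dist_comm]
      exact hconv.segment_subset h1 h2 hx
    have : dist x (z i) ≤ d := by
      rw [mem_closedBall] at hxball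
      rw [dist_comm (z i) (z (i+1))] at hxball
      exact le_trans hxball hzd.le
    have hmem : x ∈ Metric.cthickening d K :=
      mem_cthickening_of_dist_le x (z i) d K ⟨(i:ℝ)/N, himem, rfl⟩ this
    exact (hdW hmem).le
  -- total length
  set L : ℝ := max 1 (∑ i ∈ Finset.range N, ‖z (i+1) - z i‖) with hLdef
  refine ⟨L, le_max_left _ _, ?_⟩
  intro n
  obtain ⟨P, hP⟩ := exists_antideriv (f ^ n)
  -- FTC on [0,1]
  have hFTC : (∫ x in (0:ℝ)..1, (f.eval (x : ℂ)) ^ n) = P.eval 1 - P.eval 0 := by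
    have hder : ∀ x ∈ Set.uIcc (0:ℝ) 1,
        HasDerivAt (fun y : ℝ => P.eval (y : ℂ)) ((f ^ n).eval (x : ℂ)) x := by
      intro x _
      have h1 : HasDerivAt (fun w : ℂ => P.eval w) ((f ^ n).eval (x : ℂ)) (x : ℂ) := by
        have := P.hasDerivAt (x : ℂ)
        rwa [hP] at this
      exact h1.comp_ofReal
    have hi : IntervalIntegrable (fun x : ℝ => (f ^ n).eval (x : ℂ))
        MeasureTheory.volume 0 1 :=
      (((f ^ n).continuous_aeval).comp Complex.continuous_ofReal).intervalIntegrable _ _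
    have := intervalIntegral.integral_eq_sub_of_hasDerivAt hder hi
    rw [show ((1:ℝ):ℂ) = 1 by norm_num, show ((0:ℝ):ℂ) = 0 by norm_num] at this
    rw [← this]
    congr 1
    funext x
    rw [eval_pow]
  rw [hFTC]
  have htel : P.eval 1 - P.eval 0 = ∑ i ∈ Finset.range N,
      (P.eval (z (i+1)) - P.eval (z i)) := by
    rw [Finset.sum_range_sub (fun i => P.eval (z i)), hz0, hzN]
  rw [htel]
  calc ‖∑ i ∈ Finset.range N, (P.eval (z (i+1)) - P.eval (z i))‖
      ≤ ∑ i ∈ Finset.range N, ‖P.eval (z (i+1)) - P.eval (z i)‖ :=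
        norm_sum_le _ _
    _ ≤ ∑ i ∈ Finset.range N, b ^ n * ‖z (i+1) - z i‖ := by
        apply Finset.sum_le_sum
        intro i hi
        apply seg_bound (f ^ n) P hP
        intro x hx
        rw [eval_pow, norm_pow]
        exact pow_le_pow_left₀ (norm_nonneg _) (hseg i (Finset.mem_range.mp hi) x hx) n
    _ = (∑ i ∈ Finset.range N, ‖z (i+1) - z i‖) * b ^ n := by
        rw [Finset.sum_mul]
        apply Finset.sum_congr rfl
        intro i _
        ring
    _ ≤ L * b ^ n := by
        apply mul_le_mul_of_nonneg_right (le_max_right _ _) (by positivity)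

end MomentProofAux

/-- For a complex polynomial `f` of degree at least 1, with
`Mₙ(f) = ∫₀¹ f(x)^n dx` and
`S = {f z | f' z = 0} ∪ {f 0, f 1}` (a finite set),
we have `limsup |Mₙ(f)|^(1/n) ≤ max {|s| : s ∈ S}`. -/
theorem limsup_abs_moment_rpow_le_max_S
    (f : Polynomial ℂ) (hdeg : 1 ≤ f.natDegree)
    (S : Set ℂ)
    (hS : S = {w : ℂ | ∃ z : ℂ, f.derivative.eval z = 0 ∧ f.eval z = w}
            ∪ {f.eval 0, f.eval 1}) :
    Filter.limsup
      (fun n : ℕ =>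
        ‖∫ x in (0:ℝ)..1, (f.eval (x : ℂ)) ^ n‖ ^ (1 / (n : ℝ)))
      Filter.atTop
      ≤ sSup ((fun z : ℂ => ‖z‖) '' S) := by
  set r : ℝ := sSup ((fun z : ℂ => ‖z‖) '' S) with hrdef
  -- finiteness of S
  have hd0 : f.derivative ≠ 0 := by
    intro h
    have := natDegree_eq_zero_of_derivative_eq_zero h
    omega
  have hS1 : {w : ℂ | ∃ z : ℂ, f.derivative.eval z = 0 ∧ f.eval z = w}
      = (fun z => f.eval z) '' {z : ℂ | f.derivative.IsRoot z} := by
    ext w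
    constructor
    · rintro ⟨z, h1, h2⟩; exact ⟨z, h1, h2⟩
    · rintro ⟨z, h1, h2⟩; exact ⟨z, h1, h2⟩
  have hSfin : S.Finite := by
    rw [hS, hS1]
    apply Set.Finite.union
    · exact (f.derivative.finite_setOf_isRoot hd0).image _
    · exact (Set.finite_singleton _).insert _
  have hbdd : BddAbove ((fun z : ℂ => ‖z‖) '' S) := (hSfin.image _).bddAbove
  have hmem : ∀ w ∈ S, ‖w‖ ≤ r := by
    intro w hw
    exact le_csSup hbdd ⟨w, hw, rfl⟩
  have hcrit : ∀ z : ℂ, f.derivative.eval z = 0 → ‖f.eval z‖ ≤ r := by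
    intro z hz
    exact hmem _ (by rw [hS]; exact Or.inl ⟨z, hz, rfl⟩)
  have hend0 : ‖f.eval 0‖ ≤ r := hmem _ (by rw [hS]; exact Or.inr (Or.inl rfl))
  have hend1 : ‖f.eval 1‖ ≤ r := hmem _ (by rw [hS]; exact Or.inr (Or.inr rfl))
  -- the sequence
  set a : ℕ → ℝ := fun n =>
    ‖∫ x in (0:ℝ)..1, (f.eval (x : ℂ)) ^ n‖ ^ (1 / (n : ℝ)) with hadef
  have ha0 : ∀ n, 0 ≤ a n := fun n => Real.rpow_nonneg (norm_nonneg _) _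
  apply le_of_forall_gt_imp_ge_of_dense
  intro b hrb
  set b' : ℝ := (r + b) / 2 with hb'def
  have hr0 : 0 ≤ r := le_trans (norm_nonneg _) hend0
  have hrb' : r < b' := by rw [hb'def]; linarith
  have hb'b : b' < b := by rw [hb'def]; linarith
  have hb'0 : 0 < b' := lt_of_le_of_lt hr0 hrb'
  obtain ⟨L, hL1, hLb⟩ := moment_bound f hdeg hcrit hend0 hend1 hrb'
  have hL0 : 0 < L := lt_of_lt_of_le one_pos hL1
  -- eventually a n ≤ b
  have htend : Filter.Tendsto (fun n : ℕ => L ^ (1 / (n : ℝ))) Filter.atTop (nhds 1) := by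
    have h1 : Filter.Tendsto (fun n : ℕ => (1 / (n : ℝ))) Filter.atTop (nhds 0) :=
      tendsto_one_div_atTop_nhds_zero_nat
    have := Filter.Tendsto.rpow (tendsto_const_nhds (x := L)) h1 (Or.inl hL0.ne')
    simpa using this
  have hev1 : ∀ᶠ n : ℕ in Filter.atTop, L ^ (1 / (n : ℝ)) < b / b' := by
    apply htend.eventually_lt_const
    rw [lt_div_iff₀ hb'0]
    linarith
  have hev2 : ∀ᶠ n : ℕ in Filter.atTop, 1 ≤ n := Filter.eventually_ge_atTop 1
  have hev : ∀ᶠ n : ℕ in Filter.atTop, a n ≤ b := by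
    filter_upwards [hev1, hev2] with n h1 h2
    have hn0 : n ≠ 0 := by omega
    have step1 : a n ≤ (L * b' ^ n) ^ (1 / (n : ℝ)) := by
      apply Real.rpow_le_rpow (norm_nonneg _) _ (by positivity)
      exact hLb n
    have step2 : (L * b' ^ n) ^ (1 / (n : ℝ)) = L ^ (1 / (n : ℝ)) * b' := by
      rw [Real.mul_rpow hL0.le (by positivity)]
      congr 1
      rw [one_div, Real.pow_rpow_inv_natCast hb'0.le hn0]
    calc a n ≤ L ^ (1 / (n : ℝ)) * b' := by rw [← step2]; exact step1
      _ ≤ (b / b') * b' := by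
          apply mul_le_mul_of_nonneg_right h1.le hb'0.le
      _ = b := by field_simp
  exact Filter.limsup_le_of_le (Filter.isCoboundedUnder_le_of_le Filter.atTop ha0) hev
end
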